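/- Let a₄, a₅ ∈ ℝ, a₃ > 0, and define g(x,y) = a₄|x|^{3/2} + a₅y for x, y ∈ ℝ. Set a₇ = sup_{u≥0}(9a₄²u − 0.5a₃u²). Then 0 ≤ a₇ < ∞, and for all x, x̄, y, ȳ ∈ ℝ: 0.5·(g(x,y) − g(x̄,ȳ))² ≤ max(a₇, a₅²)·(|x−x̄|² + |y−ȳ|²) + 0.25·a₃·|x−x̄|²·(x² + x̄²). -/
import Mathlib
set_option maxHeartbeats 1000000

lemma key_pow_12 (x xb : ℝ) :
    (|x| ^ ((3:ℝ)/2) - |xb| ^ ((3:ℝ)/2)) ^ 2 ≤ 9/4 * |x - xb| ^ 2 * (|x| + |xb|) := by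
  set s := Real.sqrt |x| with hs
  set t := Real.sqrt |xb| with ht
  have hs0 : 0 ≤ s := Real.sqrt_nonneg _
  have ht0 : 0 ≤ t := Real.sqrt_nonneg _
  have hsx : s ^ 2 = |x| := Real.sq_sqrt (abs_nonneg x)
  have htx : t ^ 2 = |xb| := Real.sq_sqrt (abs_nonneg xb)
  have h1 : |x| ^ ((3:ℝ)/2) = s ^ 3 := by
    rw [hs, Real.sqrt_eq_rpow, ← Real.rpow_natCast (|x| ^ ((1:ℝ)/2)) 3,
      ← Real.rpow_mul (abs_nonneg x)]
    norm_num
  have h2 : |xb| ^ ((3:ℝ)/2) = t ^ 3 := by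
    rw [ht, Real.sqrt_eq_rpow, ← Real.rpow_natCast (|xb| ^ ((1:ℝ)/2)) 3,
      ← Real.rpow_mul (abs_nonneg xb)]
    norm_num
  have habs : |s ^ 2 - t ^ 2| ≤ |x - xb| := by
    rw [hsx, htx]; exact abs_abs_sub_abs_le_abs_sub x xb
  have habs2 : (s ^ 2 - t ^ 2) ^ 2 ≤ |x - xb| ^ 2 := by
    have h := sq_abs (s ^ 2 - t ^ 2)
    nlinarith [abs_nonneg (s ^ 2 - t ^ 2), abs_nonneg (x - xb)]
  have hmid : (s ^ 3 - t ^ 3) ^ 2 ≤ 9/4 * ((s ^ 2 - t ^ 2) ^ 2) * (s ^ 2 + t ^ 2) := by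
    nlinarith [mul_nonneg (sq_nonneg (s - t)) (mul_nonneg (mul_nonneg (mul_nonneg hs0 hs0) hs0) hs0),
      mul_nonneg (sq_nonneg (s - t)) (mul_nonneg (mul_nonneg (mul_nonneg ht0 ht0) ht0) ht0),
      mul_nonneg (sq_nonneg (s - t)) (mul_nonneg (mul_nonneg (mul_nonneg hs0 hs0) hs0) ht0),
      mul_nonneg (sq_nonneg (s - t)) (mul_nonneg (mul_nonneg (mul_nonneg hs0 ht0) ht0) ht0),
      mul_nonneg (sq_nonneg (s - t)) (mul_nonneg (mul_nonneg (mul_nonneg hs0 hs0) ht0) ht0)]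
  have hfin : 9/4 * ((s ^ 2 - t ^ 2) ^ 2) * (s ^ 2 + t ^ 2)
      ≤ 9/4 * |x - xb| ^ 2 * (s ^ 2 + t ^ 2) := by
    have hpos : 0 ≤ s ^ 2 + t ^ 2 := by positivity
    nlinarith
  rw [h1, h2, ← hsx, ← htx]
  linarith

theorem stmt_12 (a₃ a₄ a₅ a₇ : ℝ) (h₃ : 0 < a₃)
    (ha₇ : a₇ = sSup {v : ℝ | ∃ u : ℝ, 0 ≤ u ∧ v = 9 * a₄ ^ 2 * u - 0.5 * a₃ * u ^ 2}) :
    BddAbove {v : ℝ | ∃ u : ℝ, 0 ≤ u ∧ v = 9 * a₄ ^ 2 * u - 0.5 * a₃ * u ^ 2}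
    ∧ 0 ≤ a₇
    ∧ ∀ x xb y yb : ℝ,
      0.5 * ((a₄ * |x| ^ ((3:ℝ)/2) + a₅ * y) - (a₄ * |xb| ^ ((3:ℝ)/2) + a₅ * yb)) ^ 2
        ≤ (max a₇ (a₅ ^ 2)) * (|x - xb| ^ 2 + |y - yb| ^ 2)
          + 0.25 * a₃ * |x - xb| ^ 2 * (x ^ 2 + xb ^ 2) := by
  have hbdd : BddAbove {v : ℝ | ∃ u : ℝ, 0 ≤ u ∧ v = 9 * a₄ ^ 2 * u - 0.5 * a₃ * u ^ 2} := by
    refine ⟨41 * a₄ ^ 4 / a₃, ?_⟩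
    rintro v ⟨u, hu, rfl⟩
    rw [le_div_iff₀ h₃]
    nlinarith [sq_nonneg (a₃ * u - 9 * a₄ ^ 2), sq_nonneg (a₄ ^ 2), h₃.le]
  have hmem : ∀ u : ℝ, 0 ≤ u → 9 * a₄ ^ 2 * u - 0.5 * a₃ * u ^ 2 ≤ a₇ := by
    intro u hu
    rw [ha₇]
    exact le_csSup hbdd ⟨u, hu, rfl⟩
  have ha₇0 : 0 ≤ a₇ := by
    have := hmem 0 le_rfl
    linarith
  refine ⟨hbdd, ha₇0, fun x xb y yb => ?_⟩
  set A := |x| ^ ((3:ℝ)/2) with hA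
  set B := |xb| ^ ((3:ℝ)/2) with hB
  have hkey := key_pow_12 x xb
  set X := |x - xb| ^ 2 with hX
  set Y := |y - yb| ^ 2 with hY
  have hX0 : 0 ≤ X := sq_nonneg _
  have hY0 : 0 ≤ Y := sq_nonneg _
  have hYy : (y - yb) ^ 2 = Y := (sq_abs _).symm
  set u := (|x| + |xb|) / 2 with hu
  have hu0 : 0 ≤ u := by positivity
  have hsupu := hmem u hu0
  have hu2 : u ^ 2 ≤ (x ^ 2 + xb ^ 2) / 2 := by
    have h1 : |x| ^ 2 = x ^ 2 := sq_abs x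
    have h2 : |xb| ^ 2 = xb ^ 2 := sq_abs xb
    nlinarith [sq_nonneg (|x| - |xb|)]
  -- a₄² * (9/4) * (|x|+|xb|) ≤ a₇ + 0.25 * a₃ * (x²+xb²)
  have hcoef : a₄ ^ 2 * (9/4) * (|x| + |xb|) ≤ a₇ + 0.25 * a₃ * (x ^ 2 + xb ^ 2) := by
    have h9 : a₄ ^ 2 * (9/4) * (|x| + |xb|) = (9/2) * a₄ ^ 2 * u := by
      rw [hu]; ring
    have hnn : 0 ≤ a₄ ^ 2 * u := mul_nonneg (sq_nonneg _) hu0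
    nlinarith [h₃.le]
  have hmaxa : a₇ ≤ max a₇ (a₅ ^ 2) := le_max_left _ _
  have hmaxb : a₅ ^ 2 ≤ max a₇ (a₅ ^ 2) := le_max_right _ _
  -- 0.5 (p+q)² ≤ p² + q²
  have hsplit : 0.5 * ((a₄ * A + a₅ * y) - (a₄ * B + a₅ * yb)) ^ 2
      ≤ a₄ ^ 2 * (A - B) ^ 2 + a₅ ^ 2 * (y - yb) ^ 2 := by
    nlinarith [sq_nonneg (a₄ * (A - B) - a₅ * (y - yb))]
  have hAB : a₄ ^ 2 * (A - B) ^ 2 ≤ a₄ ^ 2 * (9/4 * X * (|x| + |xb|)) :=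
    mul_le_mul_of_nonneg_left hkey (sq_nonneg _)
  have hstep : a₄ ^ 2 * (9/4 * X * (|x| + |xb|))
      ≤ (a₇ + 0.25 * a₃ * (x ^ 2 + xb ^ 2)) * X := by
    have := mul_le_mul_of_nonneg_right hcoef hX0
    nlinarith
  have hy : a₅ ^ 2 * (y - yb) ^ 2 ≤ max a₇ (a₅ ^ 2) * Y := by
    rw [hYy]
    exact mul_le_mul_of_nonneg_right hmaxb hY0
  have hfinal : (a₇ + 0.25 * a₃ * (x ^ 2 + xb ^ 2)) * X
      ≤ max a₇ (a₅ ^ 2) * X + 0.25 * a₃ * X * (x ^ 2 + xb ^ 2) := by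
    nlinarith [mul_le_mul_of_nonneg_right hmaxa hX0]
  linarith
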